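/- Let a ≥ 1 be an integer, let G be a finite simple graph such that every subgraph G' of G satisfies |E(G')| ≤ a·|V(G')|, and let M be a matching of G. Then the contracted graph G_M is (4a−2)-degenerate, i.e., every nonempty subgraph of G_M contains a vertex of degree at most 4a−2. -/

import Mathlib

/-- `M` is a matching of `G`, viewed as a set of edges:
all edges lie in `G` and are pairwise non-adjacent (share no vertex). -/
def IsMatchingSet {V : Type*} (G : SimpleGraph V) (M : Set (Sym2 V)) : Prop :=
  M ⊆ G.edgeSet ∧ ∀ e ∈ M, ∀ f ∈ M, e ≠ f → ∀ v : V, ¬(v ∈ e ∧ v ∈ f)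

/-- The graph obtained from `G` by contracting each edge in `M`. -/
def Contract {V : Type*} (G : SimpleGraph V) (M : Set (Sym2 V)) :
    SimpleGraph (Quot fun u v : V => s(u, v) ∈ M) where
  Adj x y := x ≠ y ∧ ∃ u v : V, G.Adj u v ∧ Quot.mk _ u = x ∧ Quot.mk _ v = y
  symm := by
    constructor
    rintro x y ⟨hxy, u, v, huv, hu, hv⟩
    exact ⟨hxy.symm, v, u, huv.symm, hv, hu⟩
  loopless := by
    constructor
    rintro x ⟨hx, -⟩
    exact hx rfl

/-- If every subgraph `G'` of `G` satisfies `|E(G')| ≤ a·|V(G')|` (with `a ≥ 1`),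
and `M` is a matching of `G`, then the contracted graph `G_M` is
`(4a−2)`-degenerate: every nonempty subgraph of `G_M` contains a vertex of
degree at most `4a−2`. -/
theorem stmt_2 {V : Type*} [Fintype V] (G : SimpleGraph V) (a : ℤ) (ha : 1 ≤ a)
    (hG : ∀ G' : G.Subgraph, (G'.edgeSet.ncard : ℤ) ≤ a * (G'.verts.ncard : ℤ))
    (M : Set (Sym2 V)) (hM : IsMatchingSet G M) :
    ∀ H : (Contract G M).Subgraph, H.verts.Nonempty →
      ∃ v ∈ H.verts, ((H.neighborSet v).ncard : ℤ) ≤ 4 * a - 2 := by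
  classical
  set r : V → V → Prop := fun u v => s(u, v) ∈ M with hrdef
  intro H hne
  by_contra hcon
  push_neg at hcon
  obtain ⟨hMG, hMdisj⟩ := hM
  haveI : Finite (Quot r) := Quot.finite r
  have hV : Nonempty V := by
    obtain ⟨x0, -⟩ := hne
    induction x0 using Quot.ind with | _ v => exact ⟨v⟩
  -- uniqueness of matching edge through a vertex
  have uniq : ∀ e ∈ M, ∀ f ∈ M, ∀ v : V, v ∈ e → v ∈ f → e = f := by
    intro e he f hf v hv hv'
    by_contra hne'
    exact hMdisj e he f hf hne' v ⟨hv, hv'⟩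
  -- characterization of the quotient
  have key : ∀ u v : V, Quot.mk r u = Quot.mk r v ↔ (u = v ∨ s(u, v) ∈ M) := by
    intro u v
    constructor
    · intro h
      have h' := Quot.eqvGen_exact h
      clear h
      induction h' with
      | rel x y hxy => exact Or.inr hxy
      | refl x => exact Or.inl rfl
      | symm x y _ ih =>
        rcases ih with rfl | hm
        · exact Or.inl rfl
        · exact Or.inr (by rwa [Sym2.eq_swap] at hm)
      | trans x y z _ _ ih1 ih2 =>
        rcases ih1 with rfl | h1
        · exact ih2
        · rcases ih2 with rfl | h2
          · exact Or.inr h1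
          · by_cases he : s(x, y) = s(y, z)
            · rw [Sym2.eq_iff] at he
              rcases he with ⟨rfl, rfl⟩ | ⟨rfl, -⟩
              · exact Or.inl rfl
              · exact Or.inl rfl
            · exact absurd ⟨Sym2.mem_mk_right x y, Sym2.mem_mk_left y z⟩
                (hMdisj _ h1 _ h2 he y)
    · rintro (rfl | hm)
      · rfl
      · exact Quot.sound hm
  -- both ends of a matching edge have the same class
  have hsame : ∀ e ∈ M, ∀ x ∈ e, ∀ y ∈ e, Quot.mk r x = Quot.mk r y := by
    intro e he x hx y hy
    induction e using Sym2.ind with | _ p q =>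
    rw [Sym2.mem_iff] at hx hy
    have hpq : Quot.mk r p = Quot.mk r q := Quot.sound he
    rcases hx with rfl | rfl <;> rcases hy with rfl | rfl <;>
      first | rfl | exact hpq | exact hpq.symm
  -- lifting edges of H
  have hlift : ∀ e ∈ H.edgeSet, ∃ f : Sym2 V,
      f ∈ G.edgeSet ∧ f ∉ M ∧ Sym2.map (Quot.mk r) f = e := by
    intro e he
    induction e using Sym2.ind with | _ x y =>
    rw [SimpleGraph.Subgraph.mem_edgeSet] at he
    obtain ⟨hxy, u, v, huv, hu, hv⟩ := H.adj_sub he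
    refine ⟨s(u, v), huv, ?_, ?_⟩
    · intro hmem
      exact hxy (hu ▸ hv ▸ (Quot.sound hmem : Quot.mk r u = Quot.mk r v))
    · rw [Sym2.map_pair_eq, hu, hv]
  obtain ⟨v₀⟩ := hV
  set φ : Sym2 (Quot r) → Sym2 V := fun e =>
    if h : e ∈ H.edgeSet then (hlift e h).choose else s(v₀, v₀) with hφdef
  have hφ : ∀ e ∈ H.edgeSet, φ e ∈ G.edgeSet ∧ φ e ∉ M ∧
      Sym2.map (Quot.mk r) (φ e) = e := by
    intro e he
    simp only [hφdef, dif_pos he]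
    exact (hlift e he).choose_spec
  set A : Set (Sym2 V) := φ '' H.edgeSet with hAdef
  set B : Set (Sym2 V) := {e | e ∈ M ∧ ∃ u, u ∈ e ∧ Quot.mk r u ∈ H.verts} with hBdef
  -- the lifted subgraph
  set G' : G.Subgraph := {
    verts := {v | Quot.mk r v ∈ H.verts}
    Adj := fun u v => s(u, v) ∈ A ∪ B
    adj_sub := by
      rintro u v (⟨e, he, heq⟩ | hB)
      · exact (SimpleGraph.mem_edgeSet G).mp (heq ▸ (hφ e he).1)
      · exact (SimpleGraph.mem_edgeSet G).mp (hMG hB.1)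
    edge_vert := by
      rintro u v (⟨e, he, heq⟩ | hB)
      · have hmap : s(Quot.mk r u, Quot.mk r v) = e := by
          have h' := (hφ e he).2.2
          rw [heq, Sym2.map_pair_eq] at h'
          exact h'
        have : H.Adj (Quot.mk r u) (Quot.mk r v) := by
          rw [← SimpleGraph.Subgraph.mem_edgeSet, hmap]; exact he
        exact H.edge_vert this
      · obtain ⟨hm, w, hw, hwv⟩ := hB
        have h' : Quot.mk r u = Quot.mk r w :=
          hsame _ hm u (Sym2.mem_mk_left u v) w hw
        show Quot.mk r u ∈ H.verts
        rw [h']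
        exact hwv
    symm := by
      constructor
      intro u v h
      rwa [Sym2.eq_swap] at h } with hG'def
  have hGe : G'.edgeSet = A ∪ B := by
    ext e
    induction e using Sym2.ind with | _ u v =>
    exact SimpleGraph.Subgraph.mem_edgeSet
  -- |A| = |E(H)|
  have hA : A.ncard = H.edgeSet.ncard := by
    apply Set.ncard_image_of_injOn
    intro e he f hf heq
    rw [← (hφ e he).2.2, ← (hφ f hf).2.2, heq]
  -- A and B disjoint
  have hdisjAB : Disjoint A B := by
    rw [Set.disjoint_left]
    rintro e ⟨f, hf, rfl⟩ hB
    exact (hφ f hf).2.1 hB.1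
  have hS : (A ∪ B).ncard = H.edgeSet.ncard + B.ncard := by
    rw [Set.ncard_union_eq hdisjAB (Set.toFinite _) (Set.toFinite _), hA]
  -- class map on B
  set c : Sym2 V → Quot r := fun e => Quot.mk r e.out.1 with hcdef
  have hcB : ∀ e ∈ B, c e ∈ H.verts := by
    rintro e ⟨hm, w, hw, hwv⟩
    have h' : Quot.mk r e.out.1 = Quot.mk r w := hsame _ hm _ e.out_fst_mem w hw
    show Quot.mk r e.out.1 ∈ H.verts
    rw [h']
    exact hwv
  have hcinj : Set.InjOn c B := by
    intro e he f hf hcf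
    rcases (key _ _).mp hcf with heq | hm
    · exact uniq e he.1 f hf.1 e.out.1 e.out_fst_mem (heq ▸ f.out_fst_mem)
    · have h1 : e = s(e.out.1, f.out.1) :=
        uniq e he.1 _ hm e.out.1 e.out_fst_mem (Sym2.mem_mk_left _ _)
      have h2 : f = s(e.out.1, f.out.1) :=
        uniq f hf.1 _ hm f.out.1 f.out_fst_mem (Sym2.mem_mk_right _ _)
      rw [h1.trans h2.symm]
  have hkn : B.ncard ≤ H.verts.ncard := by
    rw [← Set.ncard_image_of_injOn hcinj]
    exact Set.ncard_le_ncard (fun x ⟨e, he, heq⟩ => heq ▸ hcB e he) (Set.toFinite _)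
  -- vertex counting
  set f : V → Sym2 V := fun v =>
    if h : ∃ e ∈ M, v ∈ e then h.choose else s(v₀, v₀) with hfdef
  have hf : ∀ v, (∃ e ∈ M, v ∈ e) → f v ∈ M ∧ v ∈ f v := by
    intro v h
    simp only [hfdef, dif_pos h]
    exact ⟨h.choose_spec.1, h.choose_spec.2⟩
  set V1 : Set V := {v | Quot.mk r v ∈ H.verts ∧ ¬ ∃ e ∈ M, v ∈ e} with hV1def
  set V2a : Set V := {v | (Quot.mk r v ∈ H.verts ∧ ∃ e ∈ M, v ∈ e) ∧ v = (f v).out.1}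
    with hV2adef
  set V2b : Set V := {v | (Quot.mk r v ∈ H.verts ∧ ∃ e ∈ M, v ∈ e) ∧ v ≠ (f v).out.1}
    with hV2bdef
  have hcover : G'.verts ⊆ V1 ∪ (V2a ∪ V2b) := by
    intro v hv
    by_cases hm : ∃ e ∈ M, v ∈ e
    · by_cases hfst : v = (f v).out.1
      · exact Or.inr (Or.inl ⟨⟨hv, hm⟩, hfst⟩)
      · exact Or.inr (Or.inr ⟨⟨hv, hm⟩, hfst⟩)
    · exact Or.inl ⟨hv, hm⟩
  have hfB : ∀ v, (Quot.mk r v ∈ H.verts ∧ ∃ e ∈ M, v ∈ e) → f v ∈ B := by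
    rintro v ⟨hv, hm⟩
    exact ⟨(hf v hm).1, v, (hf v hm).2, hv⟩
  have hmemout : ∀ (e : Sym2 V) (v : V), v ∈ e → v = e.out.1 ∨ v = e.out.2 := by
    intro e v hv
    have : e = s(e.out.1, e.out.2) := by conv_lhs => rw [← e.out_eq]
    rw [this, Sym2.mem_iff] at hv
    exact hv
  have hV2a : V2a.ncard ≤ B.ncard := by
    rw [← Set.ncard_image_of_injOn (f := f) (fun v hv w hw heq => by
      rw [hv.2, hw.2, heq])]
    exact Set.ncard_le_ncard (fun x ⟨v, hv, heq⟩ => heq ▸ hfB v hv.1) (Set.toFinite _)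
  have hV2b : V2b.ncard ≤ B.ncard := by
    rw [← Set.ncard_image_of_injOn (f := f) (fun v hv w hw heq => by
      rcases hmemout (f v) v (hf v hv.1.2).2 with h1 | h1
      · exact absurd h1 hv.2
      · rcases hmemout (f w) w (hf w hw.1.2).2 with h2 | h2
        · exact absurd h2 hw.2
        · rw [h1, h2, heq])]
    exact Set.ncard_le_ncard (fun x ⟨v, hv, heq⟩ => heq ▸ hfB v hv.1) (Set.toFinite _)
  have hV1inj : Set.InjOn (Quot.mk r) V1 := by
    intro u hu v hv heq
    rcases (key _ _).mp heq with h | h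
    · exact h
    · exact absurd ⟨s(u, v), h, Sym2.mem_mk_left u v⟩ hu.2
  have hV1k : V1.ncard + B.ncard ≤ H.verts.ncard := by
    have hdisj : Disjoint (Quot.mk r '' V1) (c '' B) := by
      rw [Set.disjoint_left]
      rintro x ⟨v, hv, rfl⟩ ⟨e, he, heq⟩
      rcases (key _ _).mp heq.symm with h | h
      · exact hv.2 ⟨e, he.1, h ▸ e.out_fst_mem⟩
      · exact hv.2 ⟨s(e.out.1, v), (Sym2.eq_swap ▸ h : s(e.out.1, v) ∈ M),
          Sym2.mem_mk_right _ _⟩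
    calc V1.ncard + B.ncard
        = (Quot.mk r '' V1).ncard + (c '' B).ncard := by
          rw [Set.ncard_image_of_injOn hV1inj, Set.ncard_image_of_injOn hcinj]
      _ = (Quot.mk r '' V1 ∪ c '' B).ncard :=
          (Set.ncard_union_eq hdisj (Set.toFinite _) (Set.toFinite _)).symm
      _ ≤ H.verts.ncard := Set.ncard_le_ncard (by
          rintro x (⟨v, hv, rfl⟩ | ⟨e, he, rfl⟩)
          · exact hv.1
          · exact hcB e he) (Set.toFinite _)
  have hverts : G'.verts.ncard ≤ H.verts.ncard + B.ncard := by
    have h1 : G'.verts.ncard ≤ V1.ncard + (V2a.ncard + V2b.ncard) := by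
      calc G'.verts.ncard ≤ (V1 ∪ (V2a ∪ V2b)).ncard :=
            Set.ncard_le_ncard hcover (Set.toFinite _)
        _ ≤ V1.ncard + (V2a ∪ V2b).ncard := Set.ncard_union_le _ _
        _ ≤ V1.ncard + (V2a.ncard + V2b.ncard) := by
            exact Nat.add_le_add_left (Set.ncard_union_le _ _) _
    omega
  -- main edge bound
  have hedge : (H.edgeSet.ncard : ℤ) ≤ (2 * a - 1) * H.verts.ncard := by
    have h1 := hG G'
    rw [hGe, hS] at h1
    push_cast at h1
    have h2 : (G'.verts.ncard : ℤ) ≤ H.verts.ncard + B.ncard := by exact_mod_cast hverts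
    have h3 : (B.ncard : ℤ) ≤ H.verts.ncard := by exact_mod_cast hkn
    nlinarith [Nat.cast_nonneg (α := ℤ) B.ncard, Nat.cast_nonneg (α := ℤ) H.verts.ncard]
  -- handshake
  haveI : Fintype ↥H.verts := Fintype.ofFinite _
  have hdeg : ∀ (v : ↥H.verts) (inst : Fintype (H.coe.neighborSet v)),
      @SimpleGraph.degree _ H.coe v inst = (H.neighborSet ↑v).ncard := by
    intro v inst
    calc @SimpleGraph.degree _ H.coe v inst
        = Fintype.card (H.coe.neighborSet v) :=
          (@SimpleGraph.card_neighborSet_eq_degree _ H.coe v inst).symm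
      _ = Nat.card (H.coe.neighborSet v) := Nat.card_eq_fintype_card.symm
      _ = Nat.card (H.neighborSet ↑v) :=
          Nat.card_congr (SimpleGraph.Subgraph.coeNeighborSetEquiv v)
      _ = (H.neighborSet ↑v).ncard := Nat.card_coe_set_eq _
  have hedges : H.coe.edgeFinset.card = H.edgeSet.ncard := by
    rw [SimpleGraph.edgeFinset_card, ← Nat.card_eq_fintype_card, Nat.card_coe_set_eq,
      ← SimpleGraph.Subgraph.image_coe_edgeSet_coe]
    exact (Set.ncard_image_of_injOn (Sym2.map.injective Subtype.val_injective).injOn).symm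
  have hsum2' : ∑ v : ↥H.verts, (H.neighborSet ↑v).ncard = 2 * H.coe.edgeFinset.card := by
    rw [← H.coe.sum_degrees_eq_twice_card_edges]
    exact Finset.sum_congr rfl fun v _ => (hdeg v _).symm
  have hn : 1 ≤ H.verts.ncard := by
    rw [Nat.one_le_iff_ne_zero]
    intro h0
    rw [Set.ncard_eq_zero (Set.toFinite _)] at h0
    exact hne.ne_empty h0
  have hcard : Fintype.card ↥H.verts = H.verts.ncard := by
    rw [Set.ncard_eq_toFinset_card', Set.toFinset_card]
  -- lower bound on the sum of degrees
  have hsum : (4 * a - 1) * (H.verts.ncard : ℤ) ≤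
      ∑ v : ↥H.verts, ((H.neighborSet ↑v).ncard : ℤ) := by
    have := Finset.card_nsmul_le_sum Finset.univ
      (fun v : ↥H.verts => ((H.neighborSet ↑v).ncard : ℤ)) (4 * a - 1)
      (fun v _ => by linarith [hcon ↑v v.2])
    simpa [hcard, nsmul_eq_mul, mul_comm] using this
  have hsum2 : ∑ v : ↥H.verts, ((H.neighborSet ↑v).ncard : ℤ) =
      2 * (H.edgeSet.ncard : ℤ) := by
    have h' : ∑ v : ↥H.verts, (H.neighborSet ↑v).ncard = 2 * H.edgeSet.ncard := by
      rw [hsum2', hedges]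
    exact_mod_cast h'
  rw [hsum2] at hsum
  have : (1 : ℤ) ≤ H.verts.ncard := by exact_mod_cast hn
  nlinarith
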